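/- Let S be the real vector space of self-adjoint operators on a finite-dimensional complex inner product space W, let S_+ ⊂ S be the positive semidefinite ones, and let M = {(D, λ) ∈ S_+ × ℂ : det D = |λ|²}. Then the map φ : M → (S/ℝE) ⊕ ℂ sending (D, λ) to (D + ℝE, λ) is bijective. -/

import Mathlib

open scoped ComplexOrder
open Matrix

lemma decomp {n : ℕ} {A : Matrix (Fin n) (Fin n) ℂ} (hA : A.IsHermitian) (t : ℝ) :
    A + t • 1 = (hA.eigenvectorUnitary : Matrix (Fin n) (Fin n) ℂ) *
      Matrix.diagonal (fun i => ((hA.eigenvalues i + t : ℝ) : ℂ)) *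
      (star (hA.eigenvectorUnitary : Matrix (Fin n) (Fin n) ℂ)) := by
  conv_lhs => rw [hA.spectral_theorem]
  have hU : (hA.eigenvectorUnitary : Matrix (Fin n) (Fin n) ℂ) *
      star (hA.eigenvectorUnitary : Matrix (Fin n) (Fin n) ℂ) = 1 :=
    Matrix.mem_unitaryGroup_iff.mp hA.eigenvectorUnitary.2
  have h1 : Matrix.diagonal (fun i => ((hA.eigenvalues i + t : ℝ) : ℂ)) =
      Matrix.diagonal (RCLike.ofReal ∘ hA.eigenvalues) + t • 1 := by
    ext i j
    by_cases h : i = j <;>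
      simp [h, Matrix.diagonal_apply, Matrix.one_apply, Complex.ofReal_add,
        Complex.real_smul]
  rw [h1, mul_add, add_mul, mul_smul_comm, smul_mul_assoc, mul_one, hU]
  rw [Unitary.conjStarAlgAut_apply]

lemma det_add {n : ℕ} {A : Matrix (Fin n) (Fin n) ℂ} (hA : A.IsHermitian) (t : ℝ) :
    (A + t • 1).det = ((∏ i, (hA.eigenvalues i + t) : ℝ) : ℂ) := by
  rw [decomp hA t, Matrix.det_mul_right_comm,
    Matrix.mem_unitaryGroup_iff.mp hA.eigenvectorUnitary.2, one_mul, Matrix.det_diagonal]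
  push_cast
  rfl

lemma psd_add {n : ℕ} {A : Matrix (Fin n) (Fin n) ℂ} (hA : A.IsHermitian) (t : ℝ)
    (h : ∀ i, 0 ≤ hA.eigenvalues i + t) : (A + t • 1).PosSemidef := by
  rw [decomp hA t, Matrix.star_eq_conjTranspose]
  refine (Matrix.posSemidef_diagonal_iff.mpr ?_).mul_mul_conjTranspose_same _
  intro i
  exact_mod_cast (h i)

lemma prod_lt {n : ℕ} (hn : 1 ≤ n) (μ : Fin n → ℝ) (hμ : ∀ i, 0 ≤ μ i) {t : ℝ}
    (ht : 0 < t) : ∏ i, μ i < ∏ i, (μ i + t) := by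
  have hne : (Finset.univ : Finset (Fin n)).Nonempty := by
    simpa [Finset.univ_nonempty_iff] using Fin.pos_iff_nonempty.mp hn
  by_cases h : ∃ i, μ i = 0
  · obtain ⟨i, hi⟩ := h
    calc ∏ i, μ i = 0 := Finset.prod_eq_zero (Finset.mem_univ i) hi
    _ < ∏ i, (μ i + t) := Finset.prod_pos fun i _ =>
        add_pos_of_nonneg_of_pos (hμ i) ht
  · push_neg at h
    exact Finset.prod_lt_prod_of_nonempty
      (fun i _ => lt_of_le_of_ne (hμ i) (Ne.symm (h i)))
      (fun i _ => lt_add_of_pos_right _ ht) hne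

lemma det_ne {n : ℕ} (hn : 1 ≤ n) {B : Matrix (Fin n) (Fin n) ℂ} (hB : B.PosSemidef)
    {t : ℝ} (ht : 0 < t) : B.det ≠ (B + t • 1).det := by
  rw [hB.1.det_eq_prod_eigenvalues, det_add hB.1]
  intro h
  have h2 : ∏ i, hB.1.eigenvalues i = ∏ i, (hB.1.eigenvalues i + t) := by
    have h' : ((∏ i, hB.1.eigenvalues i : ℝ) : ℂ) =
        ((∏ i, (hB.1.eigenvalues i + t) : ℝ) : ℂ) := by
      rw [Complex.ofReal_prod]; exact h
    exact_mod_cast h'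
  exact absurd h2 (ne_of_lt (prod_lt hn _ hB.eigenvalues_nonneg ht))

theorem bijective_quotient_map_posSemidef_det
    (n : ℕ) (hn : 1 ≤ n)
    (S : Submodule ℝ (Matrix (Fin n) (Fin n) ℂ))
    (hS : S = selfAdjoint.submodule ℝ (Matrix (Fin n) (Fin n) ℂ))
    (lineE : Submodule ℝ S)
    (hline : lineE = Submodule.span ℝ
      {(⟨(1 : Matrix (Fin n) (Fin n) ℂ),
          by rw [hS]; exact IsSelfAdjoint.one _⟩ : S)})
    (M : Set (S × ℂ))
    (hM : M = {p : S × ℂ | (p.1 : Matrix (Fin n) (Fin n) ℂ).PosSemidef ∧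
      (p.1 : Matrix (Fin n) (Fin n) ℂ).det = (‖p.2‖ ^ 2 : ℝ)}) :
    Function.Bijective (fun p : M => ((Submodule.Quotient.mk p.val.1 : S ⧸ lineE),
      p.val.2)) := by
  subst hS hline hM
  have hE : ((⟨(1 : Matrix (Fin n) (Fin n) ℂ), IsSelfAdjoint.one _⟩ :
      selfAdjoint.submodule ℝ (Matrix (Fin n) (Fin n) ℂ)) : Matrix (Fin n) (Fin n) ℂ) = 1 := rfl
  constructor
  · rintro ⟨⟨D₁, lam₁⟩, hD₁, hdet₁⟩ ⟨⟨D₂, lam₂⟩, hD₂, hdet₂⟩ h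
    simp only [Prod.mk.injEq] at h
    obtain ⟨h1, h2⟩ := h
    obtain ⟨t, ht⟩ := Submodule.mem_span_singleton.mp ((Submodule.Quotient.eq _).mp h1)
    have htm : t • (1 : Matrix (Fin n) (Fin n) ℂ) =
        (D₁ : Matrix (Fin n) (Fin n) ℂ) - (D₂ : Matrix (Fin n) (Fin n) ℂ) :=
      congrArg Subtype.val ht
    have hdet : (D₁ : Matrix (Fin n) (Fin n) ℂ).det =
        (D₂ : Matrix (Fin n) (Fin n) ℂ).det := by rw [hdet₁, hdet₂, h2]
    have ht0 : t = 0 := by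
      rcases lt_trichotomy t 0 with h | h | h
      · exfalso
        apply det_ne hn hD₁ (t := -t) (by linarith)
        rw [hdet]
        congr 1
        have : (D₂ : Matrix (Fin n) (Fin n) ℂ) =
            (D₁ : Matrix (Fin n) (Fin n) ℂ) + (-t) • 1 := by
          rw [neg_smul, htm]; abel
        rw [this]
      · exact h
      · exfalso
        apply det_ne hn hD₂ h
        rw [← hdet]
        congr 1
        rw [htm]; abel
    have hD : D₁ = D₂ := by
      apply Subtype.ext
      have := htm
      rw [ht0, zero_smul] at this
      have := this.symm
      rw [sub_eq_zero] at this
      exact this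
    simp [hD, h2]
  · rintro ⟨q, lam⟩
    obtain ⟨a, rfl⟩ := Submodule.Quotient.mk_surjective _ q
    have hA : (a : Matrix (Fin n) (Fin n) ℂ).IsHermitian := a.2
    set μ := hA.eigenvalues with hμdef
    have hnem : Nonempty (Fin n) := Fin.pos_iff_nonempty.mp hn
    obtain ⟨i₀, -, hi₀⟩ := Finset.exists_min_image Finset.univ μ Finset.univ_nonempty
    set c : ℝ := ‖lam‖ ^ 2 with hcdef
    have hc : 0 ≤ c := sq_nonneg _
    set f : ℝ → ℝ := fun t => ∏ i, (μ i + t) with hfdef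
    have hf : Continuous f :=
      continuous_finset_prod _ fun i _ => continuous_const.add continuous_id
    set t₀ : ℝ := -μ i₀ with ht₀def
    set t₁ : ℝ := t₀ + max c 1 with ht₁def
    have hft₀ : f t₀ = 0 :=
      Finset.prod_eq_zero (Finset.mem_univ i₀) (by simp [ht₀def])
    have hft₁ : c ≤ f t₁ := by
      calc c ≤ max c 1 := le_max_left _ _
      _ ≤ (max c 1) ^ n := le_self_pow₀ (le_max_right _ _) (by omega)
      _ = ∏ _i : Fin n, max c 1 := by simp [Finset.prod_const]
      _ ≤ f t₁ := by
          refine Finset.prod_le_prod (fun i _ => le_trans zero_le_one (le_max_right c 1))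
            (fun i _ => ?_)
          have := hi₀ i (Finset.mem_univ i)
          simp only [ht₁def, ht₀def]
          linarith
    have h01 : t₀ ≤ t₁ := le_add_of_nonneg_right
      (le_trans zero_le_one (le_max_right c 1))
    obtain ⟨t, htmem, htc⟩ := intermediate_value_Icc h01 hf.continuousOn
      ⟨hft₀ ▸ hc, hft₁⟩
    have hnn : ∀ i, 0 ≤ μ i + t := fun i => by
      have h1 := htmem.1
      have h2 := hi₀ i (Finset.mem_univ i)
      simp only [ht₀def] at h1
      linarith
    refine ⟨⟨(a + t • ⟨1, IsSelfAdjoint.one _⟩, lam), ?_, ?_⟩, ?_⟩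
    · show ((a : Matrix (Fin n) (Fin n) ℂ) + t • 1).PosSemidef
      exact psd_add hA t hnn
    · show ((a : Matrix (Fin n) (Fin n) ℂ) + t • 1).det = _
      rw [det_add hA t]
      exact_mod_cast congrArg Complex.ofReal htc
    · simp only [Prod.mk.injEq]
      refine ⟨?_, trivial⟩
      rw [Submodule.Quotient.eq]
      have : a + t • (⟨1, IsSelfAdjoint.one _⟩ :
          selfAdjoint.submodule ℝ (Matrix (Fin n) (Fin n) ℂ)) - a =
          t • ⟨1, IsSelfAdjoint.one _⟩ := by abel
      rw [this]
      exact Submodule.smul_mem _ _ (Submodule.mem_span_singleton_self _)
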